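/- Let a ≠ 0, M ≠ 0, and let τ_L > 0, e_L, u_L, u_R, π_L, π_R, ψ_L, ψ_R ∈ ℝ be such that τ_L* ≠ 0, where u*, π_L*, τ_L* are given by the intermediate-state formulas. Set ρ_L = 1/τ_L, ρ_L* = 1/τ_L*, σ = u_L − a·τ_L, define the intermediate internal energy by continuity of the Riemann invariant I₃⁻, namely e_L* = e_L − (M²/(2a²))·(π_L² − (π_L*)²) − ((1−M²)/a²)·(π_L − π_L*)·ψ_L, and define the total energies E_L = ρ_L·(e_L + (M²/2)·u_L²) and E_L* = ρ_L*·(e_L* + (M²/2)·(u*)²). Then the Rankine–Hugoniot condition holds across the left wave for the energy equation: u*·(E_L* + M²·π_L* + (1−M²)·ψ_L) − u_L·(E_L + M²·π_L + (1−M²)·ψ_L) = σ·(E_L* − E_L). -/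
import Mathlib


/-- The Rankine–Hugoniot condition holds across the left wave (of speed
`σ = u_L − aτ_L`) for the energy equation of the explicit Suliciu-type relaxation
subsystem, where the intermediate internal energy is defined by continuity of the
Riemann invariant `I₃⁻`. -/
theorem left_wave_energy_rankine_hugoniot
    (a M tauL eL uL uR piL piR ψL ψR uS piLs tauLs ρL ρLs σ eLs EL ELs : ℝ)
    (ha : a ≠ 0) (hM : M ≠ 0) (htauL : 0 < tauL)
    (huS : uS = (uL + uR)/2 + 1/(2*a)*((piL - piR) + (1 - M^2)/M^2*(ψL - ψR)))
    (hpiLs : piLs = (piL + piR)/2 + a/2*(uL - uR) - (1 - M^2)/(2*M^2)*(ψL - ψR))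
    (htauLs : tauLs = tauL + (uS - uL)/a)
    (hne : tauLs ≠ 0)
    (hρL : ρL = 1/tauL) (hρLs : ρLs = 1/tauLs)
    (hσ : σ = uL - a * tauL)
    (heLs : eLs = eL - M^2/(2*a^2) * (piL^2 - piLs^2) -
      (1 - M^2)/a^2 * (piL - piLs) * ψL)
    (hEL : EL = ρL * (eL + M^2/2 * uL^2))
    (hELs : ELs = ρLs * (eLs + M^2/2 * uS^2)) :
    uS * (ELs + M^2 * piLs + (1 - M^2) * ψL) -
        uL * (EL + M^2 * piL + (1 - M^2) * ψL) = σ * (ELs - EL) := by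
  have htauL' : tauL ≠ 0 := ne_of_gt htauL
  have hpi : piLs = piL - a*(uS - uL) := by
    rw [huS, hpiLs]; field_simp; ring
  have hu : uS = uL + a*(tauLs - tauL) := by
    rw [htauLs]; field_simp; ring
  clear huS hpiLs htauLs
  subst hρL hρLs hσ hEL hELs heLs hpi hu
  field_simp
  ring
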